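/- For every natural number n and every λ-term θ β-equivalent to the Church numeral n̲, the head reduction of (T₂)θf reaches the head normal form (f)(s̲)ⁿ0̲, where T₂ = λn λf (((n)f)F)0̲ with F = λx λy (x)(s̲)y. -/

import Mathlib

/- Untyped λ-calculus with de Bruijn indices, head reduction, Church numerals. -/

inductive Lam : Type
  | var : ℕ → Lam
  | app : Lam → Lam → Lam
  | lam : Lam → Lam
deriving DecidableEq, Repr

namespace Lam

/-- Shift free variables `≥ c` up by 1. -/
def lift (c : ℕ) : Lam → Lam
  | var n => if n < c then var n else var (n + 1)
  | app s t => app (s.lift c) (t.lift c)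
  | lam t => lam (t.lift (c + 1))

/-- Push a substitution under a binder. -/
def up (σ : ℕ → Lam) : ℕ → Lam
  | 0 => var 0
  | n + 1 => (σ n).lift 0

/-- Capture-avoiding simultaneous substitution. -/
def subst (σ : ℕ → Lam) : Lam → Lam
  | var n => σ n
  | app s t => app (s.subst σ) (t.subst σ)
  | lam t => lam (t.subst (up σ))

/-- `t.subst0 u` is `t[u/0]`, the β-contractum substitution. -/
def subst0 (t u : Lam) : Lam :=
  t.subst (fun n => match n with | 0 => u | n + 1 => var n)

/-- `m` occurs free in the term. -/
def FreeIn (m : ℕ) : Lam → Prop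
  | var n => n = m
  | app s t => s.FreeIn m ∨ t.FreeIn m
  | lam t => t.FreeIn (m + 1)

/-- A closed λ-term. -/
def Closed (t : Lam) : Prop := ∀ m, ¬ t.FreeIn m

end Lam

/-- One-step β-reduction (anywhere in the term). -/
inductive Beta : Lam → Lam → Prop
  | beta (t u) : Beta (.app (.lam t) u) (t.subst0 u)
  | appL {s s'} (t) : Beta s s' → Beta (.app s t) (.app s' t)
  | appR {t t'} (s) : Beta t t' → Beta (.app s t) (.app s t')
  | lam {t t'} : Beta t t' → Beta (.lam t) (.lam t')

/-- β-equivalence `≃β`. -/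
def BetaEq : Lam → Lam → Prop := Relation.EqvGen Beta

/-- A term in (β-)normal form. -/
def NormalForm (t : Lam) : Prop := ∀ u, ¬ Beta t u

/-- One step of head reduction: reduce the head redex. -/
inductive HStep : Lam → Lam → Prop
  | beta (t u) : HStep (.app (.lam t) u) (t.subst0 u)
  | lam {t t'} : HStep t t' → HStep (.lam t) (.lam t')
  | app {t t'} (u) : HStep t t' → (∀ s, t ≠ .lam s) → HStep (.app t u) (.app t' u)

/-- `HRedN k u v` : `u ≻ v` by a head reduction of length `h(u,v) = k`. -/
inductive HRedN : ℕ → Lam → Lam → Prop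
  | refl (t) : HRedN 0 t t
  | step {k t u v} : HStep t u → HRedN k u v → HRedN (k + 1) t v

/-- `u ≻ v` : `v` is obtained from `u` by head reduction. -/
def HRed (t u : Lam) : Prop := ∃ k, HRedN k t u

/-- Head normal form: no head redex. -/
def HeadNormal (t : Lam) : Prop := ∀ u, ¬ HStep t u

/-- Solvable: the head reduction terminates. -/
def Solvable (t : Lam) : Prop := ∃ v, HRed t v ∧ HeadNormal v

/-- `(t)u₁…uₙ` : iterated application. -/
def appList : Lam → List Lam → Lam
  | t, [] => t
  | t, u :: us => appList (t.app u) us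

/-- `(f)ⁿ x` with `x = var 1`, `f = var 0`. -/
def churchBody : ℕ → Lam
  | 0 => .var 1
  | n + 1 => .app (.var 0) (churchBody n)

/-- Church numeral `n̲ = λx λf (f)ⁿ x`. -/
def church (n : ℕ) : Lam := .lam (.lam (churchBody n))

/-- `0̲ = λx λf x`. -/
def czero : Lam := .lam (.lam (.var 1))

/-- `s̲ = λn λx λf (f)((n)x)f`. -/
def csucc : Lam := .lam (.lam (.lam (.app (.var 0) (.app (.app (.var 2) (.var 1)) (.var 0)))))

/-- `(s̲)ⁿ 0̲`. -/
def succIter : ℕ → Lam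
  | 0 => czero
  | n + 1 => .app csucc (succIter n)

/-- `G = λx λy (x) λz (y)(s̲)z`. -/
def Gop : Lam := .lam (.lam (.app (.var 1) (.lam (.app (.var 1) (.app csucc (.var 0))))))

/-- `δ = λf (f)0̲`. -/
def deltaOp : Lam := .lam (.app (.var 0) czero)

/-- `T₁ = λn ((n)δ)G`. -/
def T1 : Lam := .lam (.app (.app (.var 0) deltaOp) Gop)

/-- `F = λx λy (x)(s̲)y`. -/
def Fop : Lam := .lam (.lam (.app (.var 1) (.app csucc (.var 0))))

/-- `T₂ = λn λf (((n)f)F)0̲`. -/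
def T2 : Lam := .lam (.lam (.app (.app (.app (.var 1) (.var 0)) Fop) czero))

/-- `θ₀ = λx λf λz (x)(λd z)(λx x)`. -/
def theta0 : Lam := .lam (.lam (.lam (.app (.app (.var 2) (.lam (.var 1))) (.lam (.var 0)))))

/-- `T` is a storage operator for the integers (the fixed variable `f` is `var 0`). -/
def IsStorage (T : Lam) : Prop :=
  ∀ n : ℕ, ∃ τ : Lam, BetaEq τ (church n) ∧
    ∀ θ : Lam, BetaEq θ (church n) →
      ∃ σ : ℕ → Lam, HRed (.app (.app T θ) (.var 0)) (.app (.var 0) (τ.subst σ))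

/-! ### Auxiliary development: substitution algebra -/

namespace Lam

/-- Lift a renaming under a binder. -/
def upr (r : ℕ → ℕ) : ℕ → ℕ
  | 0 => 0
  | n + 1 => r n + 1

/-- Renaming. -/
def ren (r : ℕ → ℕ) : Lam → Lam
  | var n => var (r n)
  | app s t => app (s.ren r) (t.ren r)
  | lam t => lam (t.ren (upr r))

theorem ren_ext {r s : ℕ → ℕ} (h : ∀ n, r n = s n) : ∀ t : Lam, t.ren r = t.ren s := by
  intro t
  induction t generalizing r s with
  | var n => simp [ren, h]
  | app a b iha ihb => simp [ren, iha h, ihb h]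
  | lam a iha =>
      simp only [ren]
      congr 1
      exact iha (fun n => by cases n <;> simp [upr, h])

theorem subst_ext {σ τ : ℕ → Lam} (h : ∀ n, σ n = τ n) : ∀ t : Lam, t.subst σ = t.subst τ := by
  intro t
  induction t generalizing σ τ with
  | var n => simp [subst, h]
  | app a b iha ihb => simp [subst, iha h, ihb h]
  | lam a iha =>
      simp only [subst]
      congr 1
      exact iha (fun n => by cases n <;> simp [up, h])

theorem lift_eq_ren (t : Lam) : ∀ c, t.lift c = t.ren (fun n => if n < c then n else n + 1) := by
  induction t with
  | var n => intro c; simp only [lift, ren]; split <;> rfl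
  | app a b iha ihb => intro c; simp [lift, ren, iha, ihb]
  | lam a iha =>
      intro c
      simp only [lift, ren, iha]
      congr 1
      refine ren_ext (fun n => ?_) a
      cases n with
      | zero => simp [upr]
      | succ m => simp only [upr]; split <;> split <;> omega

theorem ren_ren (t : Lam) : ∀ r s, (t.ren r).ren s = t.ren (fun n => s (r n)) := by
  induction t with
  | var n => intro r s; rfl
  | app a b iha ihb => intro r s; simp [ren, iha, ihb]
  | lam a iha =>
      intro r s
      simp only [ren, iha]
      congr 1
      refine ren_ext (fun n => ?_) a
      cases n <;> simp [upr]

theorem subst_ren (t : Lam) : ∀ (r : ℕ → ℕ) (σ : ℕ → Lam),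
    (t.ren r).subst σ = t.subst (fun n => σ (r n)) := by
  induction t with
  | var n => intro r σ; rfl
  | app a b iha ihb => intro r σ; simp [ren, subst, iha, ihb]
  | lam a iha =>
      intro r σ
      simp only [ren, subst, iha]
      congr 1
      refine subst_ext (fun n => ?_) a
      cases n <;> simp [upr, up]

theorem lift0_eq_ren (t : Lam) : t.lift 0 = t.ren (fun n => n + 1) := by
  rw [lift_eq_ren]; exact ren_ext (fun n => by simp) t

theorem ren_subst (t : Lam) : ∀ (σ : ℕ → Lam) (r : ℕ → ℕ),
    (t.subst σ).ren r = t.subst (fun n => (σ n).ren r) := by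
  induction t with
  | var n => intro σ r; rfl
  | app a b iha ihb => intro σ r; simp [subst, ren, iha, ihb]
  | lam a iha =>
      intro σ r
      simp only [subst, ren, iha]
      congr 1
      refine subst_ext (fun n => ?_) a
      cases n with
      | zero => rfl
      | succ m =>
          simp only [up, lift0_eq_ren, ren_ren]
          refine ren_ext (fun n => ?_) (σ m)
          simp [upr]

theorem subst_subst (t : Lam) : ∀ (σ τ : ℕ → Lam),
    (t.subst σ).subst τ = t.subst (fun n => (σ n).subst τ) := by
  induction t with
  | var n => intro σ τ; rfl
  | app a b iha ihb => intro σ τ; simp [subst, iha, ihb]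
  | lam a iha =>
      intro σ τ
      simp only [subst, iha]
      congr 1
      refine subst_ext (fun n => ?_) a
      cases n with
      | zero => rfl
      | succ m =>
          simp only [up, lift0_eq_ren, subst_ren, ren_subst]

theorem subst_id (t : Lam) : t.subst var = t := by
  induction t with
  | var n => rfl
  | app a b iha ihb => simp [subst, iha, ihb]
  | lam a iha =>
      simp only [subst]
      congr 1
      rw [subst_ext (τ := var) (fun n => by cases n <;> simp [up, lift]) a, iha]

/-- The substitution underlying `subst0`. -/
def sz (u : Lam) : ℕ → Lam
  | 0 => u
  | n + 1 => var n

theorem subst0_def (t u : Lam) : t.subst0 u = t.subst (sz u) := by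
  unfold subst0
  exact subst_ext (fun n => by cases n <;> rfl) t

theorem subst0_subst (t u : Lam) (σ : ℕ → Lam) :
    (t.subst0 u).subst σ = (t.subst (up σ)).subst0 (u.subst σ) := by
  rw [subst0_def, subst0_def, subst_subst, subst_subst]
  refine subst_ext (fun n => ?_) t
  cases n with
  | zero => rfl
  | succ m =>
      show σ m = (up σ (m+1)).subst (sz (u.subst σ))
      simp only [up, lift0_eq_ren, subst_ren]
      exact ((subst_ext (fun n => rfl) (σ m)).trans (subst_id (σ m))).symm

theorem lift0_subst (t : Lam) (σ : ℕ → Lam) :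
    (t.lift 0).subst σ = t.subst (fun n => σ (n + 1)) := by
  rw [lift0_eq_ren, subst_ren]

theorem subst0_ren (a b : Lam) (r : ℕ → ℕ) :
    (a.subst0 b).ren r = (a.ren (upr r)).subst0 (b.ren r) := by
  rw [subst0_def, subst0_def, ren_subst, subst_ren]
  refine subst_ext (fun n => ?_) a
  cases n <;> rfl

theorem lift0_subst0 (t u : Lam) : (t.lift 0).subst0 u = t := by
  rw [subst0_def, lift0_subst]
  exact (subst_ext (fun n => rfl) t).trans (subst_id t)

end Lam
/-! ### β-reduction, β-equivalence, parallel reduction, confluence -/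

theorem Beta.substc {t u : Lam} (h : Beta t u) : ∀ σ, Beta (t.subst σ) (u.subst σ) := by
  induction h with
  | beta a b => intro σ; rw [Lam.subst0_subst]; exact Beta.beta _ _
  | appL t _ ih => intro σ; exact Beta.appL _ (ih σ)
  | appR s _ ih => intro σ; exact Beta.appR _ (ih σ)
  | lam _ ih => intro σ; exact Beta.lam (ih (Lam.up _))

namespace BetaEq

theorem rfl (t : Lam) : BetaEq t t := Relation.EqvGen.refl t
theorem symm {t u : Lam} (h : BetaEq t u) : BetaEq u t := Relation.EqvGen.symm _ _ h
theorem trans {t u v : Lam} (h : BetaEq t u) (h' : BetaEq u v) : BetaEq t v :=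
  Relation.EqvGen.trans _ _ _ h h'
theorem of_beta {t u : Lam} (h : Beta t u) : BetaEq t u := Relation.EqvGen.rel _ _ h

theorem substc {t u : Lam} (h : BetaEq t u) (σ : ℕ → Lam) :
    BetaEq (t.subst σ) (u.subst σ) := by
  induction h with
  | rel a b hab => exact of_beta (hab.substc σ)
  | refl a => exact rfl _
  | symm a b _ ih => exact ih.symm
  | trans a b c _ _ ih ih' => exact ih.trans ih'

theorem appL {a a' : Lam} (b : Lam) (h : BetaEq a a') : BetaEq (.app a b) (.app a' b) := by
  induction h with
  | rel x y hxy => exact of_beta (Beta.appL _ hxy)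
  | refl x => exact rfl _
  | symm x y _ ih => exact ih.symm
  | trans x y z _ _ ih ih' => exact ih.trans ih'

theorem appR {b b' : Lam} (a : Lam) (h : BetaEq b b') : BetaEq (.app a b) (.app a b') := by
  induction h with
  | rel x y hxy => exact of_beta (Beta.appR _ hxy)
  | refl x => exact rfl _
  | symm x y _ ih => exact ih.symm
  | trans x y z _ _ ih ih' => exact ih.trans ih'

theorem lam {a a' : Lam} (h : BetaEq a a') : BetaEq (.lam a) (.lam a') := by
  induction h with
  | rel x y hxy => exact of_beta (Beta.lam hxy)
  | refl x => exact rfl _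
  | symm x y _ ih => exact ih.symm
  | trans x y z _ _ ih ih' => exact ih.trans ih'

theorem app {a a' b b' : Lam} (h : BetaEq a a') (h' : BetaEq b b') :
    BetaEq (.app a b) (.app a' b') := (appL b h).trans (appR a' h')

end BetaEq

/-- Parallel reduction. -/
inductive Par : Lam → Lam → Prop
  | var (n) : Par (.var n) (.var n)
  | lam {a b} : Par a b → Par (.lam a) (.lam b)
  | app {a a' b b'} : Par a a' → Par b b' → Par (.app a b) (.app a' b')
  | beta {a a' b b'} : Par a a' → Par b b' → Par (.app (.lam a) b) (a'.subst0 b')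

namespace Par

theorem refl (t : Lam) : Par t t := by
  induction t with
  | var n => exact Par.var n
  | app a b iha ihb => exact Par.app iha ihb
  | lam a iha => exact Par.lam iha

theorem ren {t u : Lam} (h : Par t u) : ∀ r, Par (t.ren r) (u.ren r) := by
  induction h with
  | var n => intro r; exact Par.var _
  | lam _ ih => intro r; exact Par.lam (ih _)
  | app _ _ ih ih' => intro r; exact Par.app (ih r) (ih' r)
  | beta _ _ ih ih' =>
      intro r
      rw [Lam.subst0_ren]
      exact Par.beta (ih (Lam.upr r)) (ih' r)

theorem substc {t u : Lam} (h : Par t u) : ∀ {σ τ : ℕ → Lam}, (∀ n, Par (σ n) (τ n)) →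
    Par (t.subst σ) (u.subst τ) := by
  induction h with
  | var n => intro σ τ hστ; exact hστ n
  | lam _ ih =>
      intro σ τ hστ
      refine Par.lam (ih (fun n => ?_))
      cases n with
      | zero => exact Par.var 0
      | succ m => simp only [Lam.up, Lam.lift0_eq_ren]; exact (hστ m).ren _
  | app _ _ ih ih' => intro σ τ hστ; exact Par.app (ih hστ) (ih' hστ)
  | beta _ _ ih ih' =>
      intro σ τ hστ
      rw [Lam.subst0_subst]
      refine Par.beta (ih (fun n => ?_)) (ih' hστ)
      cases n with
      | zero => exact Par.var 0
      | succ m => simp only [Lam.up, Lam.lift0_eq_ren]; exact (hστ m).ren _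

theorem subst0 {a a' b b' : Lam} (h : Par a a') (h' : Par b b') :
    Par (a.subst0 b) (a'.subst0 b') := by
  rw [Lam.subst0_def, Lam.subst0_def]
  exact h.substc (fun n => by cases n with
    | zero => exact h'
    | succ m => exact Par.var m)

theorem of_beta {t u : Lam} (h : Beta t u) : Par t u := by
  induction h with
  | beta a b => exact Par.beta (refl a) (refl b)
  | appL t _ ih => exact Par.app ih (refl t)
  | appR s _ ih => exact Par.app (refl s) ih
  | lam _ ih => exact Par.lam ih

theorem to_betaEq {t u : Lam} (h : Par t u) : BetaEq t u := by
  induction h with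
  | var n => exact BetaEq.rfl _
  | lam _ ih => exact BetaEq.lam ih
  | app _ _ ih ih' => exact BetaEq.app ih ih'
  | beta _ _ ih ih' =>
      exact (BetaEq.app (BetaEq.lam ih) ih').trans (BetaEq.of_beta (Beta.beta _ _))

end Par

/-- Complete development. -/
def cd : Lam → Lam
  | .var n => .var n
  | .lam t => .lam (cd t)
  | .app (.lam a) b => (cd a).subst0 (cd b)
  | .app (.var n) b => .app (.var n) (cd b)
  | .app (.app a₁ a₂) b => .app (cd (.app a₁ a₂)) (cd b)

theorem par_var_inv {n : ℕ} {u : Lam} (h : Par (.var n) u) : u = .var n := by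
  cases h; rfl

theorem par_lam_inv {a u : Lam} (h : Par (.lam a) u) : ∃ b, u = .lam b ∧ Par a b := by
  cases h with
  | lam hab => exact ⟨_, rfl, hab⟩

theorem par_triangle {t u : Lam} (h : Par t u) : Par u (cd t) := by
  induction h with
  | var n => exact Par.var n
  | lam _ ih => exact Par.lam ih
  | beta _ _ ih ih' => exact Par.subst0 ih ih'
  | @app a a' b b' ha hb ih ih' =>
      cases a with
      | var n =>
          obtain rfl := par_var_inv ha
          exact Par.app ih ih'
      | app a₁ a₂ =>
          exact Par.app ih ih'
      | lam a₀ =>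
          obtain ⟨c, rfl, hc⟩ := par_lam_inv ha
          have ihc : Par (Lam.lam c) (cd (Lam.lam a₀)) := ih
          rw [show cd (Lam.lam a₀) = Lam.lam (cd a₀) from rfl] at ihc
          obtain ⟨d, hd, hcd⟩ := par_lam_inv ihc
          obtain rfl : d = cd a₀ := by injection hd with h; exact h.symm
          exact Par.beta hcd ih'
/-! ### Confluence and shape inversions -/

/-- Reflexive-transitive closure of parallel reduction. -/
abbrev ParS := Relation.ReflTransGen Par

theorem par_diamond : ∀ a b c : Lam, Par a b → Par a c →
    ∃ d, Relation.ReflGen Par b d ∧ Relation.ReflTransGen Par c d := by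
  intro a b c hab hac
  exact ⟨cd a, Relation.ReflGen.single (par_triangle hab),
    Relation.ReflTransGen.single (par_triangle hac)⟩

theorem betaEq_to_eqvgen_par {t u : Lam} (h : BetaEq t u) : Relation.EqvGen Par t u := by
  induction h with
  | rel a b hab => exact Relation.EqvGen.rel _ _ (Par.of_beta hab)
  | refl a => exact Relation.EqvGen.refl a
  | symm a b _ ih => exact Relation.EqvGen.symm _ _ ih
  | trans a b c _ _ ih ih' => exact Relation.EqvGen.trans _ _ _ ih ih'

theorem eqvgen_par_join {t u : Lam} (h : Relation.EqvGen Par t u) :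
    Relation.Join ParS t u := by
  have equiv := Relation.equivalence_join_reflTransGen (r := Par) par_diamond
  induction h with
  | rel a b hab => exact ⟨b, Relation.ReflTransGen.single hab, Relation.ReflTransGen.refl⟩
  | refl a => exact equiv.refl a
  | symm a b _ ih => exact equiv.symm ih
  | trans a b c _ _ ih ih' => exact equiv.trans ih ih'

theorem betaEq_join {t u : Lam} (h : BetaEq t u) : ∃ d, ParS t d ∧ ParS u d :=
  eqvgen_par_join (betaEq_to_eqvgen_par h)

theorem parS_to_betaEq {t u : Lam} (h : ParS t u) : BetaEq t u := by
  induction h with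
  | refl => exact BetaEq.rfl t
  | tail _ hp ih => exact ih.trans hp.to_betaEq

theorem parS_var_inv {n : ℕ} {d : Lam} (h : ParS (.var n) d) : d = .var n := by
  induction h with
  | refl => rfl
  | tail _ hp ih => subst ih; exact par_var_inv hp

theorem parS_lam_inv {b d : Lam} (h : ParS (.lam b) d) :
    ∃ b₂, d = .lam b₂ ∧ ParS b b₂ := by
  induction h with
  | refl => exact ⟨b, rfl, Relation.ReflTransGen.refl⟩
  | tail _ hp ih =>
      obtain ⟨b₁, rfl, hb₁⟩ := ih
      obtain ⟨b₂, rfl, hb₂⟩ := par_lam_inv hp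
      exact ⟨b₂, rfl, hb₁.tail hb₂⟩

theorem par_appvar_inv {j : ℕ} {e u : Lam} (h : Par (.app (.var j) e) u) :
    ∃ e', u = .app (.var j) e' ∧ Par e e' := by
  cases h with
  | app h1 h2 => obtain rfl := par_var_inv h1; exact ⟨_, rfl, h2⟩

theorem parS_appvar_inv {j : ℕ} {e d : Lam} (h : ParS (.app (.var j) e) d) :
    ∃ e₂, d = .app (.var j) e₂ ∧ ParS e e₂ := by
  induction h with
  | refl => exact ⟨e, rfl, Relation.ReflTransGen.refl⟩
  | tail _ hp ih =>
      obtain ⟨e₁, rfl, he₁⟩ := ih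
      obtain ⟨e₂, rfl, he₂⟩ := par_appvar_inv hp
      exact ⟨e₂, rfl, he₁.tail he₂⟩
/-! ### Head reduction machinery -/

theorem HStep.to_beta {t u : Lam} (h : HStep t u) : Beta t u := by
  induction h with
  | beta a b => exact Beta.beta a b
  | lam _ ih => exact Beta.lam ih
  | app u _ _ ih => exact Beta.appL u ih

theorem hstep_shape {t u : Lam} (h : HStep t u) :
    (∃ a b, t = .app a b) ∨ (∃ a, t = .lam a) := by
  cases h with
  | beta a b => exact Or.inl ⟨_, _, rfl⟩
  | lam _ => exact Or.inr ⟨_, rfl⟩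
  | app _ _ _ => exact Or.inl ⟨_, _, rfl⟩

theorem HStep.substc {t u : Lam} (h : HStep t u) : ∀ σ : ℕ → Lam,
    HStep (t.subst σ) (u.subst σ) := by
  induction h with
  | beta a b =>
      intro σ
      rw [Lam.subst0_subst]
      exact HStep.beta _ _
  | lam _ ih => intro σ; exact HStep.lam (ih _)
  | @app t t' v hs hnl ih =>
      intro σ
      rcases hstep_shape hs with ⟨a, b, rfl⟩ | ⟨a, rfl⟩
      · exact HStep.app _ (ih _) (fun s hs' => by simp [Lam.subst] at hs')
      · exact absurd rfl (hnl a)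

theorem hstep_lam_inv {a u : Lam} (h : HStep (.lam a) u) :
    ∃ b, u = .lam b ∧ HStep a b := by
  cases h with
  | lam h => exact ⟨_, rfl, h⟩

namespace HRed

theorem refl (t : Lam) : HRed t t := ⟨0, HRedN.refl t⟩

theorem head {t u v : Lam} (h : HStep t u) (h' : HRed u v) : HRed t v := by
  obtain ⟨k, hk⟩ := h'
  exact ⟨k + 1, HRedN.step h hk⟩

theorem single {t u : Lam} (h : HStep t u) : HRed t u := head h (refl u)

theorem trans {t u v : Lam} (h : HRed t u) (h' : HRed u v) : HRed t v := by
  obtain ⟨k, hk⟩ := h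
  induction hk with
  | refl => exact h'
  | step hs _ ih => exact head hs (ih h')

theorem substc {t u : Lam} (h : HRed t u) (σ : ℕ → Lam) : HRed (t.subst σ) (u.subst σ) := by
  obtain ⟨k, hk⟩ := h
  induction hk with
  | refl => exact refl _
  | step hs _ ih => exact head (hs.substc σ) ih

theorem lam {t u : Lam} (h : HRed t u) : HRed (.lam t) (.lam u) := by
  obtain ⟨k, hk⟩ := h
  induction hk with
  | refl => exact refl _
  | step hs _ ih => exact head (HStep.lam hs) ih

theorem to_betaEq {t u : Lam} (h : HRed t u) : BetaEq t u := by
  obtain ⟨k, hk⟩ := h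
  induction hk with
  | refl => exact BetaEq.rfl _
  | step hs _ ih => exact (BetaEq.of_beta hs.to_beta).trans ih

end HRed

theorem hredN_lam_proj {k : ℕ} {a v : Lam} (h : HRedN k (.lam a) v) :
    ∃ b, v = .lam b ∧ HRedN k a b := by
  induction k generalizing a with
  | zero => cases h with | refl => exact ⟨a, rfl, HRedN.refl a⟩
  | succ m ih =>
      cases h with
      | step hs hrest =>
          obtain ⟨b, rfl, hb⟩ := hstep_lam_inv hs
          obtain ⟨c, rfl, hc⟩ := ih hrest
          exact ⟨c, rfl, HRedN.step hb hc⟩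

theorem hred_lam_proj {a v : Lam} (h : HRed (.lam a) v) :
    ∃ b, v = .lam b ∧ HRed a b := by
  obtain ⟨k, hk⟩ := h
  obtain ⟨b, rfl, hb⟩ := hredN_lam_proj hk
  exact ⟨b, rfl, ⟨k, hb⟩⟩

/-- Head reduction where every step starts from a non-abstraction
(hence liftable into application contexts). -/
inductive NL : Lam → Lam → Prop
  | refl (t) : NL t t
  | head {t u v} : HStep t u → (∀ s, t ≠ .lam s) → NL u v → NL t v

namespace NL

theorem to_hred {t u : Lam} (h : NL t u) : HRed t u := by
  induction h with
  | refl t => exact HRed.refl t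
  | head hs _ _ ih => exact HRed.head hs ih

theorem trans {t u v : Lam} (h : NL t u) (h' : NL u v) : NL t v := by
  induction h with
  | refl t => exact h'
  | head hs hnl _ ih => exact NL.head hs hnl (ih h')

theorem app_left {t u : Lam} (h : NL t u) (v : Lam) : NL (.app t v) (.app u v) := by
  induction h with
  | refl t => exact refl _
  | head hs hnl _ ih =>
      exact NL.head (HStep.app v hs hnl) (fun s hs' => by simp at hs') ih

theorem substc {t u : Lam} (h : NL t u) (σ : ℕ → Lam) : NL (t.subst σ) (u.subst σ) := by
  induction h with
  | refl t => exact refl _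
  | @head t₁ u₁ v₁ hs hnl _ ih =>
      refine NL.head (hs.substc σ) (fun s hs' => ?_) ih
      rcases hstep_shape hs with ⟨a, b, rfl⟩ | ⟨a, rfl⟩
      · simp [Lam.subst] at hs'
      · exact absurd rfl (hnl a)

end NL

/-- A term which head-reduces to a non-abstraction is non-lam all along. -/
theorem nl_of_hred {t u : Lam} (h : HRed t u) (hu : ∀ s, u ≠ .lam s) : NL t u := by
  obtain ⟨k, hk⟩ := h
  induction hk with
  | refl => exact NL.refl _
  | @step k t₁ u₁ v₁ hs hrest ih =>
      refine NL.head hs (fun s hseq => ?_) (ih hu)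
      subst hseq
      obtain ⟨b, rfl, -⟩ := hstep_lam_inv hs
      obtain ⟨c, rfl, -⟩ := hredN_lam_proj hrest
      exact hu _ rfl

/-- Truncate a head reduction to an abstraction at the first abstraction. -/
theorem hred_to_lam {t c : Lam} (h : HRed t (.lam c)) :
    ∃ c₀, NL t (.lam c₀) ∧ HRed c₀ c := by
  obtain ⟨k, hk⟩ := h
  induction k generalizing t with
  | zero => cases hk with | refl => exact ⟨c, NL.refl _, HRed.refl c⟩
  | succ m ih =>
      cases hk with
      | @step _ _ u _ hs hrest =>
          rcases hstep_shape hs with ⟨a, b, rfl⟩ | ⟨a, rfl⟩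
          · obtain ⟨c₀, hnl, hc₀⟩ := ih hrest
            exact ⟨c₀, NL.head hs (fun s h' => by simp at h') hnl, hc₀⟩
          · obtain ⟨b, rfl, hb⟩ := hstep_lam_inv hs
            obtain ⟨d, hd, hdc⟩ := hredN_lam_proj hrest
            obtain rfl : d = c := by injection hd with h'; exact h'.symm
            exact ⟨a, NL.refl _, HRed.head hb ⟨m, hdc⟩⟩
/-! ### Semi-standardization: spine parallel reduction -/

/-- Parallel reduction which keeps the head redex (non-abstraction case). -/
inductive SpinePar : Lam → Lam → Prop
  | var (n) : SpinePar (.var n) (.var n)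
  | red {a a' b b'} : Par a a' → Par b b' → SpinePar (.app (.lam a) b) (.app (.lam a') b')
  | app {m n a b} : SpinePar m n → Par a b → SpinePar (.app m a) (.app n b)

/-- Internal parallel reduction. -/
inductive IPar : Lam → Lam → Prop
  | spine {m n} : SpinePar m n → IPar m n
  | lam {a b} : Par a b → IPar (.lam a) (.lam b)

theorem spinePar_left_nonlam {m n : Lam} (h : SpinePar m n) : ∀ s, m ≠ .lam s := by
  cases h <;> intro s h' <;> simp at h'

theorem spinePar_right_nonlam {m n : Lam} (h : SpinePar m n) : ∀ s, n ≠ .lam s := by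
  cases h <;> intro s h' <;> simp at h'

theorem SpinePar.to_par {m n : Lam} (h : SpinePar m n) : Par m n := by
  induction h with
  | var n => exact Par.var n
  | red h1 h2 => exact Par.app (Par.lam h1) h2
  | app _ h2 ih => exact Par.app ih h2

theorem IPar.to_par {m n : Lam} (h : IPar m n) : Par m n := by
  cases h with
  | spine h => exact h.to_par
  | lam h => exact Par.lam h

/-- Factorization through substitution (auxiliary for `par_factor`). -/
theorem spine_subst_factor {m n : Lam} (h : SpinePar m n) :
    ∀ {σ σ' : ℕ → Lam}, (∀ i, Par (σ i) (σ' i)) →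
      (∀ i, ∃ L, NL (σ i) L ∧ IPar L (σ' i)) →
      ∃ L, NL (m.subst σ) L ∧ IPar L (n.subst σ') := by
  induction h with
  | var i => intro σ σ' hσ hfac; exact hfac i
  | @red a a' b b' ha hb =>
      intro σ σ' hσ hfac
      refine ⟨_, NL.refl _, IPar.spine (SpinePar.red ?_ ?_)⟩
      · exact ha.substc (fun i => by
          cases i with
          | zero => exact Par.var 0
          | succ j => simp only [Lam.up, Lam.lift0_eq_ren]; exact (hσ j).ren _)
      · exact hb.substc hσ
  | @app m₁ n₁ a₂ b₂ hsp hpa ih =>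
      intro σ σ' hσ hfac
      obtain ⟨L₁, hnl₁, hip₁⟩ := ih hσ hfac
      show ∃ L, NL (.app (m₁.subst σ) (a₂.subst σ)) L ∧
        IPar L (.app (n₁.subst σ') (b₂.subst σ'))
      generalize hq : n₁.subst σ' = Q at hip₁ ⊢
      cases hip₁ with
      | spine hsp₁ =>
          exact ⟨.app L₁ (a₂.subst σ), hnl₁.app_left _,
            IPar.spine (SpinePar.app hsp₁ (hpa.substc hσ))⟩
      | @lam p q hpq =>
          exact ⟨.app (.lam p) (a₂.subst σ), hnl₁.app_left _,
            IPar.spine (SpinePar.red hpq (hpa.substc hσ))⟩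

/-- The substitution-factorization hypothesis for `sz`. -/
theorem sz_factor {b b' Lb : Lam} (hb : Par b b') (hfb : NL b Lb) (hib : IPar Lb b') :
    (∀ i, Par (Lam.sz b i) (Lam.sz b' i)) ∧
    (∀ i, ∃ L, NL (Lam.sz b i) L ∧ IPar L (Lam.sz b' i)) := by
  constructor
  · intro i; cases i with
    | zero => exact hb
    | succ j => exact Par.var j
  · intro i; cases i with
    | zero => exact ⟨Lb, hfb, hib⟩
    | succ j => exact ⟨_, NL.refl _, IPar.spine (SpinePar.var j)⟩

/-- T1: a parallel step factors as liftable head steps followed by an internal step. -/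
theorem par_factor {M N : Lam} (h : Par M N) : ∃ L, NL M L ∧ IPar L N := by
  induction h with
  | var n => exact ⟨_, NL.refl _, IPar.spine (SpinePar.var n)⟩
  | @lam a b hab _ => exact ⟨_, NL.refl _, IPar.lam hab⟩
  | @app a a' b b' ha hb ih ih' =>
      obtain ⟨L₁, hnl₁, hip₁⟩ := ih
      cases hip₁ with
      | spine hsp =>
          exact ⟨.app L₁ b, hnl₁.app_left b, IPar.spine (SpinePar.app hsp hb)⟩
      | @lam a₀ b₀ hab₀ =>
          exact ⟨.app (.lam a₀) b, hnl₁.app_left b,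
            IPar.spine (SpinePar.red hab₀ hb)⟩
  | @beta a a' b b' ha hb ih ih' =>
      obtain ⟨La, hfa, hia⟩ := ih
      obtain ⟨Lb, hfb, hib⟩ := ih'
      obtain ⟨hσ, hfacσ⟩ := sz_factor hb hfb hib
      have step1 : NL (.app (.lam a) b) (a.subst0 b) :=
        NL.head (HStep.beta a b) (by simp) (NL.refl _)
      have hfa' : NL (a.subst0 b) (La.subst (Lam.sz b)) := by
        rw [Lam.subst0_def]; exact hfa.substc _
      cases hia with
      | spine hsp =>
          obtain ⟨L, hnlL, hipL⟩ := spine_subst_factor hsp hσ hfacσ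
          refine ⟨L, step1.trans (hfa'.trans hnlL), ?_⟩
          rw [Lam.subst0_def]
          exact hipL
      | @lam p q hpq =>
          refine ⟨(Lam.lam p).subst (Lam.sz b), step1.trans hfa', ?_⟩
          rw [Lam.subst0_def]
          show IPar (.lam (p.subst (Lam.up (Lam.sz b)))) (.lam (q.subst (Lam.up (Lam.sz b'))))
          refine IPar.lam (hpq.substc (fun i => ?_))
          cases i with
          | zero => exact Par.var 0
          | succ j => simp only [Lam.up, Lam.lift0_eq_ren]; exact (hσ j).ren _

/-- T2: a head step after a spine-parallel step can be pulled back. -/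
theorem spine_pullback {M N : Lam} (h : SpinePar M N) : ∀ {N'}, HStep N N' →
    ∃ M', NL M M' ∧ Par M' N' := by
  induction h with
  | var n => intro N' h'; cases h'
  | @red a a' b b' ha hb =>
      intro N' h'
      cases h' with
      | beta => exact ⟨_, NL.head (HStep.beta a b) (by simp) (NL.refl _), Par.subst0 ha hb⟩
      | app _ hs hnl => exact absurd rfl (hnl a')
  | @app m n a b hsp hpa ih =>
      intro N' h'
      cases h' with
      | beta t u => exact absurd rfl (spinePar_right_nonlam hsp _)
      | app _ hs hnl =>
          obtain ⟨M₁, hnl₁, hp₁⟩ := ih hs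
          exact ⟨.app M₁ a, hnl₁.app_left a, Par.app hp₁ hpa⟩

/-- Commutation: parallel reduction can be pulled back through head reduction. -/
theorem par_hred_comm : ∀ k N, ∀ V M, HRedN k N V → Par M N →
    ∃ M', HRed M M' ∧ Par M' V := by
  intro k
  induction k using Nat.strong_induction_on with
  | _ k ihk =>
  intro N
  induction N with
  | var n =>
      intro V M h hp
      cases h with
      | refl => exact ⟨M, HRed.refl M, hp⟩
      | step hs _ => cases hs
  | app N₁ N₂ ihN₁ ihN₂ =>
      intro V M h hp
      cases h with
      | refl => exact ⟨M, HRed.refl M, hp⟩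
      | @step m _ u _ hs hrest =>
          obtain ⟨L, hnl, hip⟩ := par_factor hp
          cases hip with
          | spine hsp =>
              obtain ⟨L₁, hnl₁, hp₁⟩ := spine_pullback hsp hs
              obtain ⟨W, hW, hpV⟩ := ihk m (Nat.lt_succ_self m) u V L₁ hrest hp₁
              exact ⟨W, (hnl.to_hred.trans hnl₁.to_hred).trans hW, hpV⟩
  | lam b ihb =>
      intro V M h hp
      obtain ⟨v, rfl, hbv⟩ := hredN_lam_proj h
      obtain ⟨L, hnl, hip⟩ := par_factor hp
      cases hip with
      | spine hsp => exact absurd rfl (spinePar_right_nonlam hsp b)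
      | @lam a₀ b₀ hab₀ =>
          obtain ⟨a', ha', hpa'⟩ := ihb v a₀ hbv hab₀
          exact ⟨.lam a', hnl.to_hred.trans ha'.lam, Par.lam hpa'⟩
/-! ### Shape lemmas: head reduction from β-equivalence -/

theorem par_to_hred_var {t : Lam} {k : ℕ} (h : Par t (.var k)) : HRed t (.var k) := by
  obtain ⟨L, hnl, hip⟩ := par_factor h
  cases hip with
  | spine hsp => cases hsp with | var => exact hnl.to_hred

theorem par_to_nl_lam {t b : Lam} (h : Par t (.lam b)) :
    ∃ b', NL t (.lam b') ∧ Par b' b := by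
  obtain ⟨L, hnl, hip⟩ := par_factor h
  cases hip with
  | spine hsp => exact absurd rfl (spinePar_right_nonlam hsp b)
  | lam hb => exact ⟨_, hnl, hb⟩

theorem par_to_nl_appvar {t e : Lam} {j : ℕ} (h : Par t (.app (.var j) e)) :
    ∃ e', NL t (.app (.var j) e') ∧ Par e' e := by
  obtain ⟨L, hnl, hip⟩ := par_factor h
  cases hip with
  | spine hsp =>
      cases hsp with
      | app hsp₁ hpa => cases hsp₁ with | var => exact ⟨_, hnl, hpa⟩

theorem parS_to_hred_var {t : Lam} {k : ℕ} (h : ParS t (.var k)) : HRed t (.var k) := by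
  induction h using Relation.ReflTransGen.head_induction_on with
  | refl => exact HRed.refl _
  | @head t t₁ hp _ ih =>
      obtain ⟨m, hm⟩ := ih
      obtain ⟨t', ht', hp'⟩ := par_hred_comm m t₁ (.var k) t hm hp
      exact ht'.trans (par_to_hred_var hp')

theorem parS_to_hred_lam {t b : Lam} (h : ParS t (.lam b)) :
    ∃ b', HRed t (.lam b') ∧ BetaEq b' b := by
  induction h using Relation.ReflTransGen.head_induction_on with
  | refl => exact ⟨b, HRed.refl _, BetaEq.rfl b⟩
  | @head t t₁ hp _ ih =>
      obtain ⟨b₁, hb₁, heq₁⟩ := ih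
      obtain ⟨m, hm⟩ := hb₁
      obtain ⟨t', ht', hp'⟩ := par_hred_comm m t₁ (.lam b₁) t hm hp
      obtain ⟨b', hnl', hpb'⟩ := par_to_nl_lam hp'
      exact ⟨b', ht'.trans hnl'.to_hred, hpb'.to_betaEq.trans heq₁⟩

theorem parS_to_hred_appvar {t e : Lam} {j : ℕ} (h : ParS t (.app (.var j) e)) :
    ∃ e', HRed t (.app (.var j) e') ∧ BetaEq e' e := by
  induction h using Relation.ReflTransGen.head_induction_on with
  | refl => exact ⟨e, HRed.refl _, BetaEq.rfl e⟩
  | @head t t₁ hp _ ih =>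
      obtain ⟨e₁, he₁, heq₁⟩ := ih
      obtain ⟨m, hm⟩ := he₁
      obtain ⟨t', ht', hp'⟩ := par_hred_comm m t₁ (.app (.var j) e₁) t hm hp
      obtain ⟨e', hnl', hpe'⟩ := par_to_nl_appvar hp'
      exact ⟨e', ht'.trans hnl'.to_hred, hpe'.to_betaEq.trans heq₁⟩

/-- If `t ≃β x` for a variable `x`, then the head reduction of `t` reaches `x`. -/
theorem shape_var {t : Lam} {k : ℕ} (h : BetaEq t (.var k)) : NL t (.var k) := by
  obtain ⟨d, h₁, h₂⟩ := betaEq_join h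
  obtain rfl := parS_var_inv h₂
  exact nl_of_hred (parS_to_hred_var h₁) (fun s h' => by simp at h')

/-- If `t ≃β λ b`, the head reduction of `t` reaches some `λ b'` with `b' ≃β b`,
through non-abstractions. -/
theorem shape_lam {t b : Lam} (h : BetaEq t (.lam b)) :
    ∃ b', NL t (.lam b') ∧ BetaEq b' b := by
  obtain ⟨d, h₁, h₂⟩ := betaEq_join h
  obtain ⟨b₂, rfl, hb₂⟩ := parS_lam_inv h₂
  obtain ⟨b₁, hb₁, heq₁⟩ := parS_to_hred_lam h₁
  obtain ⟨b', hnl, hb'⟩ := hred_to_lam hb₁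
  exact ⟨b', hnl,
    (hb'.to_betaEq.trans heq₁).trans (parS_to_betaEq hb₂).symm⟩

/-- If `t ≃β (x)e`, the head reduction of `t` reaches `(x)e'` with `e' ≃β e`. -/
theorem shape_appvar {t e : Lam} {j : ℕ} (h : BetaEq t (.app (.var j) e)) :
    ∃ e', NL t (.app (.var j) e') ∧ BetaEq e' e := by
  obtain ⟨d, h₁, h₂⟩ := betaEq_join h
  obtain ⟨e₂, rfl, he₂⟩ := parS_appvar_inv h₂
  obtain ⟨e', he', heq⟩ := parS_to_hred_appvar h₁
  exact ⟨e', nl_of_hred he' (fun s h' => by simp at h'),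
    heq.trans (parS_to_betaEq he₂).symm⟩
/-! ### The main computation for `T₂` -/

/-- `(s̲)ᵏ ν` accumulated innermost-first. -/
def sApp : ℕ → Lam → Lam
  | 0, ν => ν
  | k + 1, ν => sApp k (.app csucc ν)

theorem sApp_succIter : ∀ k m, sApp k (succIter m) = succIter (k + m) := by
  intro k
  induction k with
  | zero => intro m; simp [sApp]
  | succ j ih =>
      intro m
      show sApp j (.app csucc (succIter m)) = _
      rw [show Lam.app csucc (succIter m) = succIter (m + 1) from rfl, ih]
      congr 1
      omega

theorem churchBody_subst {σ : ℕ → Lam} (h0 : σ 0 = .var 0) (h1 : σ 1 = .var 1) :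
    ∀ n, (churchBody n).subst σ = churchBody n := by
  intro n
  induction n with
  | zero => exact h1
  | succ m ih =>
      show Lam.app (σ 0) ((churchBody m).subst σ) = _
      rw [h0, ih]
      rfl

/-- Main inner induction: Krivine's iteration lemma for `F`. -/
theorem keyD : ∀ (k : ℕ) (t ν : Lam), BetaEq t (churchBody k) →
    HRed (.app (t.subst0 Fop) ν) (.app (.var 0) (sApp k ν)) := by
  intro k
  induction k with
  | zero =>
      intro t ν ht
      have hnl : NL t (.var 1) := shape_var ht
      have hs : NL (t.subst0 Fop) (.var 0) := by
        rw [Lam.subst0_def]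
        exact hnl.substc (Lam.sz Fop)
      exact (hs.app_left ν).to_hred
  | succ k ih =>
      intro t ν ht
      obtain ⟨e, hnl, he⟩ := shape_appvar (t := t) (e := churchBody k) (j := 0) ht
      have hs : NL (t.subst0 Fop) (.app Fop (e.subst0 Fop)) := by
        rw [Lam.subst0_def, Lam.subst0_def]
        exact hnl.substc (Lam.sz Fop)
      set e' : Lam := e.subst0 Fop with he'
      have lift1 : HRed (.app (t.subst0 Fop) ν) (.app (.app Fop e') ν) :=
        (hs.app_left ν).to_hred
      have s1 : HStep (.app (.app Fop e') ν)
          (.app (.lam (.app (e'.lift 0) (.app csucc (.var 0)))) ν) := by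
        refine HStep.app ν ?_ (fun s h' => by simp at h')
        have : HStep (.app Fop e')
            ((Lam.lam (.app (.var 1) (.app csucc (.var 0)))).subst0 e') :=
          HStep.beta _ e'
        exact this
      have s2 : HStep (.app (.lam (.app (e'.lift 0) (.app csucc (.var 0)))) ν)
          (.app e' (.app csucc ν)) := by
        have comp : (Lam.app (e'.lift 0) (.app csucc (.var 0))).subst0 ν
            = .app e' (.app csucc ν) := by
          have : (Lam.app (e'.lift 0) (.app csucc (.var 0))).subst0 ν
              = .app ((e'.lift 0).subst0 ν) (.app csucc ν) := rfl
          rw [this, Lam.lift0_subst0]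
        have := HStep.beta (Lam.app (e'.lift 0) (.app csucc (.var 0))) ν
        rwa [comp] at this
      have tail := ih e (.app csucc ν) he
      exact lift1.trans (HRed.head s1 (HRed.head s2 tail))
/-- For every `n` and every `θ ≃β n̲`, `(T₂)θf ≻ (f)(s̲)ⁿ0̲` (with `f = var 0`). -/
theorem T2_head_reduction (n : ℕ) (θ : Lam) (h : BetaEq θ (church n)) :
    HRed (.app (.app T2 θ) (.var 0)) (.app (.var 0) (succIter n)) := by
  -- Step 1: unfold the two outer redexes of `T₂`.
  have s1 : HStep (.app (.app T2 θ) (.var 0))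
      (.app ((Lam.lam (.app (.app (.app (.var 1) (.var 0)) Fop) czero)).subst0 θ) (.var 0)) :=
    HStep.app (.var 0) (HStep.beta _ θ) (fun s h' => by simp [T2] at h')
  have comp1 : (Lam.lam (.app (.app (.app (.var 1) (.var 0)) Fop) czero)).subst0 θ
      = .lam (.app (.app (.app (θ.lift 0) (.var 0)) Fop) czero) := rfl
  have s2 : HStep (.app (.lam (.app (.app (.app (θ.lift 0) (.var 0)) Fop) czero)) (.var 0))
      (.app (.app (.app θ (.var 0)) Fop) czero) := by
    have comp2 : (Lam.app (.app (.app (θ.lift 0) (.var 0)) Fop) czero).subst0 (.var 0)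
        = .app (.app (.app θ (.var 0)) Fop) czero := by
      have : (Lam.app (.app (.app (θ.lift 0) (.var 0)) Fop) czero).subst0 (.var 0)
          = .app (.app (.app ((θ.lift 0).subst0 (.var 0)) (.var 0)) Fop) czero := rfl
      rw [this, Lam.lift0_subst0]
    have := HStep.beta (Lam.app (.app (.app (θ.lift 0) (.var 0)) Fop) czero) (Lam.var 0)
    rwa [comp2] at this
  -- Step 2: θ head-reduces to an abstraction.
  obtain ⟨θ₀, hnl₀, hθ₀⟩ := shape_lam (t := θ) (b := .lam (churchBody n)) h
  have lift0 : HRed (.app (.app (.app θ (.var 0)) Fop) czero)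
      (.app (.app (.app (.lam θ₀) (.var 0)) Fop) czero) :=
    (((hnl₀.app_left (.var 0)).app_left Fop).app_left czero).to_hred
  have s3 : HStep (.app (.app (.app (.lam θ₀) (.var 0)) Fop) czero)
      (.app (.app (θ₀.subst0 (.var 0)) Fop) czero) :=
    HStep.app czero (HStep.app Fop (HStep.beta θ₀ (.var 0)) (fun s h' => by simp at h'))
      (fun s h' => by simp at h')
  -- Step 3: the result is again β-equivalent to an abstraction.
  have hθ₁ : BetaEq (θ₀.subst0 (.var 0)) (.lam (churchBody n)) := by
    have := hθ₀.substc (Lam.sz (.var 0))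
    rw [Lam.subst0_def]
    refine this.trans ?_
    have : (Lam.lam (churchBody n)).subst (Lam.sz (.var 0)) = .lam (churchBody n) := by
      show Lam.lam ((churchBody n).subst (Lam.up (Lam.sz (.var 0)))) = _
      rw [churchBody_subst (σ := Lam.up (Lam.sz (.var 0))) rfl rfl]
    rw [this]
    exact BetaEq.rfl _
  obtain ⟨θ₂, hnl₂, hθ₂⟩ := shape_lam hθ₁
  have lift1 : HRed (.app (.app (θ₀.subst0 (.var 0)) Fop) czero)
      (.app (.app (.lam θ₂) Fop) czero) :=
    ((hnl₂.app_left Fop).app_left czero).to_hred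
  have s4 : HStep (.app (.app (.lam θ₂) Fop) czero) (.app (θ₂.subst0 Fop) czero) :=
    HStep.app czero (HStep.beta θ₂ Fop) (fun s h' => by simp at h')
  -- Step 4: the iteration lemma.
  have tail := keyD n θ₂ czero hθ₂
  have final : sApp n czero = succIter n := by
    have := sApp_succIter n 0
    simpa [succIter] using this
  rw [final] at tail
  rw [comp1] at s1
  exact HRed.head s1 (HRed.head s2 (lift0.trans (HRed.head s3
    (lift1.trans (HRed.head s4 tail)))))
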